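/- Every nonzero polynomial f ∈ ℤ[t], regarded as an element of the completed group ring ℤ̂[[t^ℤ̂]], is not a zero-divisor: if g ∈ ℤ̂[[t^ℤ̂]] satisfies f·g = 0, then g = 0. -/

import Mathlib

open Polynomial

set_option synthInstance.maxHeartbeats 1000000
set_option maxHeartbeats 1000000

noncomputable section
noncomputable section

/-- The ring of profinite integers `ẐZ = lim_n ℤ/nℤ`, realized as the subring of
`∏ n : ℕ+, ZMod n` consisting of families compatible under the natural projections. -/
def ZHatSubring : Subring (∀ n : ℕ+, ZMod n) where
  carrier := {f | ∀ (m n : ℕ+) (h : (m : ℕ) ∣ (n : ℕ)), ZMod.castHom h (ZMod m) (f n) = f m}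
  mul_mem' := fun {a b} ha hb m n h => by
    simp only [Pi.mul_apply, map_mul, ha m n h, hb m n h]
  one_mem' := fun m n h => map_one _
  add_mem' := fun {a b} ha hb m n h => by
    simp only [Pi.add_apply, map_add, ha m n h, hb m n h]
  zero_mem' := fun m n h => map_zero _
  neg_mem' := fun {a} ha m n h => by
    simp only [Pi.neg_apply, map_neg, ha m n h]

/-- The profinite integers as a type. -/
abbrev ZHat : Type := ZHatSubring

instance : CommRing ZHat := inferInstance

/-- The quotient ring `R[t]/(tⁿ - 1)`. -/
abbrev CycModN (R : Type) [CommRing R] (n : ℕ+) : Type :=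
  Polynomial R ⧸ Ideal.span {(X : Polynomial R) ^ (n : ℕ) - 1}

lemma X_pow_sub_one_dvd {R : Type} [CommRing R] {m n : ℕ} (h : m ∣ n) :
    (X : Polynomial R) ^ m - 1 ∣ (X : Polynomial R) ^ n - 1 := by
  obtain ⟨k, rfl⟩ := h
  simpa [pow_mul] using sub_dvd_pow_sub_pow ((X : Polynomial R) ^ m) 1 k

/-- The natural transition map `R[t]/(tⁿ-1) → R[t]/(tᵐ-1)` for `m ∣ n`. -/
def cycTransition (R : Type) [CommRing R] {m n : ℕ+} (h : (m : ℕ) ∣ (n : ℕ)) :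
    CycModN R n →+* CycModN R m :=
  Ideal.Quotient.factor
    (Ideal.span_singleton_le_span_singleton.mpr (X_pow_sub_one_dvd h))

/-- The completed group ring `R[[t^Ẑ]] = lim_n R[t]/(tⁿ-1)`, realized as the subring of
`∏ n : ℕ+, R[t]/(tⁿ-1)` of families compatible under the transition maps. -/
def CompletedCycRing (R : Type) [CommRing R] : Subring (∀ n : ℕ+, CycModN R n) where
  carrier := {f | ∀ (m n : ℕ+) (h : (m : ℕ) ∣ (n : ℕ)), cycTransition R h (f n) = f m}
  mul_mem' := fun {a b} ha hb m n h => by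
    simp only [Pi.mul_apply, map_mul, ha m n h, hb m n h]
  one_mem' := fun m n h => map_one _
  add_mem' := fun {a b} ha hb m n h => by
    simp only [Pi.add_apply, map_add, ha m n h, hb m n h]
  zero_mem' := fun m n h => map_zero _
  neg_mem' := fun {a} ha m n h => by
    simp only [Pi.neg_apply, map_neg, ha m n h]

instance completedCycRingCommRing (R : Type) [CommRing R] :
    CommRing (CompletedCycRing R) := inferInstance

/-- The natural ring homomorphism `R[t] → R[[t^Ẑ]]`, `f ↦ (f mod (tⁿ-1))ₙ`. -/
def polyToCompleted (R : Type) [CommRing R] : Polynomial R →+* CompletedCycRing R :=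
  RingHom.codRestrict (Pi.ringHom fun n => Ideal.Quotient.mk _) _
    (fun f m n h => by
      simp only [cycTransition, Pi.ringHom_apply]
      exact Ideal.Quotient.factor_mk _ f)

/-- The natural ring homomorphism `ℤ[t] → R[[t^Ẑ]]`. -/
def intPolyEmb (R : Type) [CommRing R] : Polynomial ℤ →+* CompletedCycRing R :=
  (polyToCompleted R).comp (Polynomial.mapRingHom (Int.castRingHom R))



-- ===================== Auxiliary lemmas =====================

section Aux

lemma zhat_nsmul_cancel (c : ℕ+) (x : ZHat) (h : (c : ℕ) • x = 0) : x = 0 := by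
  apply Subtype.ext
  funext m
  have hcomp := x.2 m (c * m) ⟨(c : ℕ), mul_comm _ _⟩
  have hm : (c : ℕ) • (x.1 (c * m)) = 0 := by
    have := congrFun (congrArg Subtype.val h) (c * m)
    exact (nsmul_eq_mul _ _).trans (by simpa using this)
  haveI : NeZero ((c * m : ℕ+) : ℕ) := ⟨(c * m).pos.ne'⟩
  set X : ℕ := (x.1 (c * m)).val with hX
  have hcast : ((X : ℕ) : ZMod (c * m)) = x.1 (c * m) := by
    exact ZMod.natCast_zmod_val _
  have hzero : (((c : ℕ) * X : ℕ) : ZMod (c * m)) = 0 := by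
    push_cast
    rw [hcast]
    exact (nsmul_eq_mul _ _).symm.trans hm
  have hdvd : ((c * m : ℕ+) : ℕ) ∣ (c : ℕ) * X :=
    (ZMod.natCast_eq_zero_iff _ _).1 hzero
  have hdvd' : (m : ℕ) ∣ X := by
    rcases hdvd with ⟨t, ht⟩
    refine ⟨t, ?_⟩
    have hc : (c : ℕ) ≠ 0 := c.pos.ne'
    apply Nat.eq_of_mul_eq_mul_left c.pos
    rw [ht]
    push_cast
    ring
  have : x.1 m = ((X : ℕ) : ZMod m) := by
    rw [← hcomp]
    rw [ZMod.castHom_apply, ZMod.cast_eq_val]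
  rw [this]
  simpa using (ZMod.natCast_eq_zero_iff _ _).2 hdvd'


lemma zhat_zsmul_cancel {r : ℤ} (hr : r ≠ 0) (x : ZHat) (h : r • x = 0) : x = 0 := by
  have hc : (r.natAbs : ℕ) • x = 0 := by
    rcases Int.natAbs_eq r with he | he
    · rw [← natCast_zsmul, ← he]; exact h
    · rw [← natCast_zsmul, ← neg_neg ((r.natAbs : ℤ) • x), ← neg_zsmul, ← he, h, neg_zero]
  exact zhat_nsmul_cancel ⟨r.natAbs, Int.natAbs_pos.2 hr⟩ x hc

lemma zhat_divisible (x : ZHat) (h : ∀ M : ℕ+, ∃ y, x = (M : ℕ) • y) : x = 0 := by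
  apply Subtype.ext
  funext m
  obtain ⟨y, hy⟩ := h m
  have : x.1 m = (m : ℕ) • (y.1 m) := by
    rw [hy]; rfl
  rw [this, nsmul_eq_mul]
  simp [ZMod.natCast_self]

lemma monicXn (n : ℕ+) : ((X : Polynomial ZHat) ^ (n : ℕ) - 1).Monic := by
  have := monic_X_pow_sub_C (1 : ZHat) n.pos.ne'
  rwa [Polynomial.C_1] at this

/-- mod-by-monic representative map. -/
def mbm (n : ℕ+) : CycModN ZHat n →ₗ[ZHat] Polynomial ZHat :=
  AdjoinRoot.modByMonicHom (monicXn n)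

lemma mk_mbm (n : ℕ+) (x : CycModN ZHat n) :
    Ideal.Quotient.mk _ (mbm n x) = x :=
  AdjoinRoot.mk_leftInverse (monicXn n) x

lemma cyc_zsmul_cancel (n : ℕ+) {r : ℤ} (hr : r ≠ 0) {x : CycModN ZHat n}
    (h : r • x = 0) : x = 0 := by
  have h1 : r • (mbm n x) = 0 := by
    rw [← map_zsmul (mbm n), h, map_zero]
  have h2 : mbm n x = 0 := by
    apply Polynomial.ext
    intro i
    rw [Polynomial.coeff_zero]
    refine zhat_zsmul_cancel hr _ ?_
    rw [← Polynomial.coeff_smul, h1, Polynomial.coeff_zero]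
  rw [← mk_mbm n x, h2, map_zero]

lemma cyc_divisible (n : ℕ+) {x : CycModN ZHat n}
    (h : ∀ M : ℕ+, ∃ y, x = (M : ℕ) • y) : x = 0 := by
  have h2 : mbm n x = 0 := by
    apply Polynomial.ext
    intro i
    rw [Polynomial.coeff_zero]
    apply zhat_divisible
    intro M
    obtain ⟨y, hy⟩ := h M
    exact ⟨(mbm n y).coeff i, by rw [hy, map_nsmul, Polynomial.coeff_smul]⟩
  rw [← mk_mbm n x, h2, map_zero]

lemma completed_zsmul_cancel {r : ℤ} (hr : r ≠ 0) {g : CompletedCycRing ZHat}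
    (h : r • g = 0) : g = 0 := by
  refine Subtype.ext (funext fun m => ?_)
  exact cyc_zsmul_cancel m hr (congrFun (congrArg Subtype.val h) m)


/-- the component map `ℤ[X] → ZHat[X]/(Xⁿ-1)`. -/
def phi (n : ℕ+) : Polynomial ℤ →+* CycModN ZHat n :=
  (Ideal.Quotient.mk _).comp (Polynomial.mapRingHom (Int.castRingHom ZHat))

lemma phi_X_pow_sub_one (n : ℕ+) (d : ℕ) :
    phi n ((X : Polynomial ℤ) ^ d - 1) = Ideal.Quotient.mk _ ((X : Polynomial ZHat) ^ d - 1) := by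
  show Ideal.Quotient.mk _ (((X : Polynomial ℤ) ^ d - 1).map (Int.castRingHom ZHat)) = _
  rw [Polynomial.map_sub, Polynomial.map_pow, Polynomial.map_X, Polynomial.map_one]

lemma intPolyEmb_component (f : Polynomial ℤ) (n : ℕ+) :
    (intPolyEmb ZHat f).1 n = phi n f := rfl

lemma mul_component (a b : CompletedCycRing ZHat) (n : ℕ+) :
    (a * b).1 n = a.1 n * b.1 n := rfl

lemma transition_component (g : CompletedCycRing ZHat) {m n : ℕ+} (h : (m : ℕ) ∣ (n : ℕ)) :
    cycTransition ZHat h (g.1 n) = g.1 m := g.2 m n h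

lemma cycTransition_mk (R : Type) [CommRing R] {m n : ℕ+} (h : (m : ℕ) ∣ (n : ℕ))
    (p : Polynomial R) :
    cycTransition R h (Ideal.Quotient.mk _ p) = Ideal.Quotient.mk _ p :=
  Ideal.Quotient.factor_mk _ _

lemma mk_X_pow_self (n : ℕ+) :
    (Ideal.Quotient.mk (Ideal.span {(X : Polynomial ZHat) ^ (n : ℕ) - 1}) X) ^ (n : ℕ) = 1 := by
  rw [← map_pow, ← sub_eq_zero, ← map_one (Ideal.Quotient.mk
    (Ideal.span {(X : Polynomial ZHat) ^ (n : ℕ) - 1})), ← map_sub]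
  exact Ideal.Quotient.eq_zero_iff_mem.2 (Ideal.subset_span rfl)

lemma dvd_geom_sum_diff {R : Type*} [CommRing R] (y : R) (k M : ℕ) :
    (y ^ k - 1) ∣ (∑ i ∈ Finset.range (k * M), y ^ i - M • ∑ i ∈ Finset.range k, y ^ i) := by
  induction M with
  | zero => simp
  | succ M ih =>
    rw [Nat.mul_succ, Finset.sum_range_add, succ_nsmul]
    have key : ∑ i ∈ Finset.range k, y ^ (k * M + i) - ∑ i ∈ Finset.range k, y ^ i
        = (∑ i ∈ Finset.range k, y ^ i) * ((y ^ k) ^ M - 1) := by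
      rw [← Finset.sum_sub_distrib, Finset.sum_mul]
      refine Finset.sum_congr rfl fun i _ => ?_
      rw [pow_add, pow_mul]; ring
    have h2 : (y ^ k - 1) ∣ ((y ^ k) ^ M - 1) := by
      simpa using sub_dvd_pow_sub_pow (y ^ k) 1 M
    have hsplit : ∑ i ∈ Finset.range (k * M), y ^ i + ∑ i ∈ Finset.range k, y ^ (k * M + i)
        - (M • ∑ i ∈ Finset.range k, y ^ i + ∑ i ∈ Finset.range k, y ^ i)
        = (∑ i ∈ Finset.range (k * M), y ^ i - M • ∑ i ∈ Finset.range k, y ^ i)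
          + (∑ i ∈ Finset.range k, y ^ (k * M + i) - ∑ i ∈ Finset.range k, y ^ i) := by
      abel
    rw [hsplit, key]
    exact dvd_add ih (Dvd.dvd.mul_left h2 _)

lemma lemA (d : ℕ+) {g : CompletedCycRing ZHat}
    (h : intPolyEmb ZHat ((X : Polynomial ℤ) ^ (d : ℕ) - 1) * g = 0) : g = 0 := by
  -- key step: for n divisible by d, g.1 n is divisible by every M
  have key : ∀ n : ℕ+, (d : ℕ) ∣ (n : ℕ) → g.1 n = 0 := by
    intro n hdn
    obtain ⟨k, hk⟩ := hdn
    apply cyc_divisible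
    intro M
    set N : ℕ+ := n * M with hN
    have hcomp : ((X : Polynomial ZHat) ^ (d : ℕ) - 1) *
        mbm N (g.1 N) ∈ Ideal.span {(X : Polynomial ZHat) ^ (N : ℕ) - 1} := by
      rw [← Ideal.Quotient.eq_zero_iff_mem, map_mul, mk_mbm]
      have hval : phi N ((X : Polynomial ℤ) ^ (d : ℕ) - 1) * g.1 N = 0 :=
        congrFun (congrArg Subtype.val h) N
      rw [phi_X_pow_sub_one] at hval
      exact hval
    rw [Ideal.mem_span_singleton] at hcomp
    obtain ⟨Q, hQ⟩ := hcomp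
    have hNd : (d : ℕ) * (k * M) = (N : ℕ) := by
      rw [hN]; push_cast; rw [hk]; ring
    have hfac : (X : Polynomial ZHat) ^ (N : ℕ) - 1 =
        ((X : Polynomial ZHat) ^ (d : ℕ) - 1) *
          ∑ i ∈ Finset.range (k * M), ((X : Polynomial ZHat) ^ (d : ℕ)) ^ i := by
      rw [mul_geom_sum, ← pow_mul, hNd]
    have hcancel : mbm N (g.1 N) =
        (∑ i ∈ Finset.range (k * M), ((X : Polynomial ZHat) ^ (d : ℕ)) ^ i) * Q := by
      have hreg := (monicXn d).isRegular.left
      exact hreg (show ((X : Polynomial ZHat) ^ (d : ℕ) - 1) * _ = _ by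
        rw [hQ, hfac]; ring)
    have hdvdnN : (n : ℕ) ∣ (N : ℕ) := ⟨(M : ℕ), by rw [hN]; push_cast; ring⟩
    have hg_n : g.1 n = Ideal.Quotient.mk _
        ((∑ i ∈ Finset.range (k * M), ((X : Polynomial ZHat) ^ (d : ℕ)) ^ i) * Q) := by
      rw [← transition_component g hdvdnN, ← mk_mbm N (g.1 N), cycTransition_mk, hcancel]
    have hpow : ((X : Polynomial ZHat) ^ (d : ℕ)) ^ k - 1 = (X : Polynomial ZHat) ^ (n : ℕ) - 1 := by
      rw [← pow_mul, ← hk]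
    have hdvd2 : ((X : Polynomial ZHat) ^ (n : ℕ) - 1) ∣
        (∑ i ∈ Finset.range (k * (M : ℕ)), ((X : Polynomial ZHat) ^ (d : ℕ)) ^ i
          - (M : ℕ) • ∑ i ∈ Finset.range k, ((X : Polynomial ZHat) ^ (d : ℕ)) ^ i) := by
      rw [← hpow]
      exact dvd_geom_sum_diff _ _ _
    have hsum : (Ideal.Quotient.mk (Ideal.span {(X : Polynomial ZHat) ^ (n : ℕ) - 1}))
        (∑ i ∈ Finset.range (k * (M : ℕ)), ((X : Polynomial ZHat) ^ (d : ℕ)) ^ i)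
        = (Ideal.Quotient.mk (Ideal.span {(X : Polynomial ZHat) ^ (n : ℕ) - 1}))
          ((M : ℕ) • ∑ i ∈ Finset.range k, ((X : Polynomial ZHat) ^ (d : ℕ)) ^ i) :=
      Ideal.Quotient.eq.2 (Ideal.mem_span_singleton.2 hdvd2)
    refine ⟨(Ideal.Quotient.mk _ (∑ i ∈ Finset.range k, ((X : Polynomial ZHat) ^ (d : ℕ)) ^ i))
      * Ideal.Quotient.mk _ Q, ?_⟩
    rw [hg_n, map_mul, hsum, map_nsmul, smul_mul_assoc]
  -- general n
  apply Subtype.ext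
  funext n
  have h1 : g.1 (n * d) = 0 := key (n * d) ⟨(n : ℕ), by push_cast; ring⟩
  have h2 := transition_component g (m := n) (n := n * d) ⟨(d : ℕ), by push_cast; ring⟩
  rw [h1, map_zero] at h2
  exact h2.symm


lemma exists_int_scale (P : Polynomial ℚ) :
    ∃ (a : ℤ) (p : Polynomial ℤ), a ≠ 0 ∧ p.map (Int.castRingHom ℚ) = (a : Polynomial ℚ) * P := by
  obtain ⟨b, hb⟩ := IsLocalization.integerNormalization_map_to_map (nonZeroDivisors ℤ) P
  refine ⟨(b : ℤ), IsLocalization.integerNormalization (nonZeroDivisors ℤ) P,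
    nonZeroDivisors.ne_zero b.2, ?_⟩
  rw [show Int.castRingHom ℚ = algebraMap ℤ ℚ from rfl, hb, zsmul_eq_mul]

lemma map_X_pow_sub_one (n : ℕ) :
    ((X : Polynomial ℤ) ^ n - 1).map (Int.castRingHom ℚ) = (X : Polynomial ℚ) ^ n - 1 := by
  rw [Polynomial.map_sub, Polynomial.map_pow, Polynomial.map_X, Polynomial.map_one]

lemma levelB (n : ℕ+) (f : Polynomial ℤ)
    (hcop : IsCoprime (f.map (Int.castRingHom ℚ)) ((X : Polynomial ℚ) ^ (n : ℕ) - 1))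
    {g : CompletedCycRing ZHat} (hfg : intPolyEmb ZHat f * g = 0) : g.1 n = 0 := by
  obtain ⟨u, v, huv⟩ := hcop
  obtain ⟨a, u₁, ha, hu⟩ := exists_int_scale u
  obtain ⟨b, v₁, hb, hv⟩ := exists_int_scale v
  have hid : u₁ * (((b : ℤ) : Polynomial ℤ) * f)
      + v₁ * (((a : ℤ) : Polynomial ℤ) * ((X : Polynomial ℤ) ^ (n : ℕ) - 1))
      = ((a * b : ℤ) : Polynomial ℤ) := by
    apply Polynomial.map_injective (Int.castRingHom ℚ) Int.cast_injective
    rw [Polynomial.map_add, Polynomial.map_mul, Polynomial.map_mul, Polynomial.map_mul,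
      Polynomial.map_mul, Polynomial.map_intCast, Polynomial.map_intCast,
      Polynomial.map_intCast, hu, hv, map_X_pow_sub_one]
    push_cast
    linear_combination ((a : Polynomial ℚ) * (b : Polynomial ℚ)) * huv
  have hzero : phi n f * g.1 n = 0 := congrFun (congrArg Subtype.val hfg) n
  have h0 : phi n ((X : Polynomial ℤ) ^ (n : ℕ) - 1) = 0 := by
    rw [phi_X_pow_sub_one]
    exact Ideal.Quotient.eq_zero_iff_mem.2 (Ideal.subset_span rfl)
  have hphi := congrArg (phi n) hid
  rw [map_add, map_mul, map_mul, map_mul, map_mul, map_intCast, map_intCast, map_intCast,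
    h0, mul_zero, mul_zero, add_zero] at hphi
  have hfin : ((a * b : ℤ) : CycModN ZHat n) * g.1 n
      = (phi n u₁ * ((b : ℤ) : CycModN ZHat n)) * (phi n f * g.1 n) := by
    rw [← hphi]; ring
  rw [hzero, mul_zero] at hfin
  exact cyc_zsmul_cancel n (mul_ne_zero ha hb) (by rw [zsmul_eq_mul, hfin])

lemma main_aux : ∀ (k : ℕ) (f : Polynomial ℤ), f.natDegree = k → f ≠ 0 →
    ∀ g : CompletedCycRing ZHat, intPolyEmb ZHat f * g = 0 → g = 0 := by
  intro k
  induction k using Nat.strong_induction_on with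
  | _ k ih =>
    intro f hdeg hf g hfg
    by_cases hcop : ∀ n : ℕ+,
        IsCoprime (f.map (Int.castRingHom ℚ)) ((X : Polynomial ℚ) ^ (n : ℕ) - 1)
    · exact Subtype.ext (funext fun n => levelB n f (hcop n) hfg)
    · push_neg at hcop
      obtain ⟨n, hn⟩ := hcop
      classical
      set F := f.map (Int.castRingHom ℚ) with hF
      set G := (X : Polynomial ℚ) ^ ((n : ℕ+) : ℕ) - 1 with hG
      have hFne : F ≠ 0 := by
        intro h0
        exact hf (Polynomial.map_injective (Int.castRingHom ℚ) Int.cast_injective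
          (by rw [Polynomial.map_zero]; exact h0))
      have hDl := EuclideanDomain.gcd_dvd_left F G
      have hDr := EuclideanDomain.gcd_dvd_right F G
      set D := EuclideanDomain.gcd F G with hDdef
      have hDne : D ≠ 0 := fun h0 => hFne (EuclideanDomain.gcd_eq_zero_iff.1 h0).1
      have hDnu : ¬ IsUnit D := fun hu => hn (EuclideanDomain.gcd_isUnit_iff.1 hu)
      obtain ⟨F', hF'⟩ := hDl
      obtain ⟨D'', hD''⟩ := hDr
      have hF'ne : F' ≠ 0 := fun h0 => hFne (by rw [hF', h0, mul_zero])
      have hdegD : 1 ≤ D.natDegree := by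
        by_contra hlt
        push_neg at hlt
        obtain ⟨c, hc⟩ := Polynomial.natDegree_eq_zero.1 (Nat.lt_one_iff.1 hlt)
        have hcne : c ≠ 0 := fun h0 => hDne (by rw [← hc, h0, Polynomial.C_0])
        exact hDnu (by rw [← hc]; exact Polynomial.isUnit_C.2 (isUnit_iff_ne_zero.2 hcne))
      have hdeglt : F'.natDegree < k := by
        have h1 : F.natDegree = D.natDegree + F'.natDegree := by
          rw [hF']; exact Polynomial.natDegree_mul hDne hF'ne
        have h2 : F.natDegree = k := by
          rw [hF, Polynomial.natDegree_map_eq_of_injective Int.cast_injective, hdeg]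
        omega
      obtain ⟨a, d₁, ha, hd₁⟩ := exists_int_scale D
      obtain ⟨b, f₂, hb, hf₂⟩ := exists_int_scale F'
      obtain ⟨e, d₂, he, hd₂⟩ := exists_int_scale D''
      have hid1 : d₁ * f₂ = ((a * b : ℤ) : Polynomial ℤ) * f := by
        apply Polynomial.map_injective (Int.castRingHom ℚ) Int.cast_injective
        rw [Polynomial.map_mul, Polynomial.map_mul, hd₁, hf₂, Polynomial.map_intCast, ← hF, hF']
        push_cast
        ring
      have hid2 : d₁ * d₂ = ((a * e : ℤ) : Polynomial ℤ)
          * ((X : Polynomial ℤ) ^ ((n : ℕ+) : ℕ) - 1) := by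
        apply Polynomial.map_injective (Int.castRingHom ℚ) Int.cast_injective
        rw [Polynomial.map_mul, Polynomial.map_mul, hd₁, hd₂, Polynomial.map_intCast,
          map_X_pow_sub_one, ← hG, hD'']
        push_cast
        ring
      have hf₂ne : f₂ ≠ 0 := by
        intro h0
        rw [h0, Polynomial.map_zero] at hf₂
        exact hF'ne ((mul_eq_zero.1 hf₂.symm).resolve_left
          (fun hb0 => hb (by exact_mod_cast hb0)))
      have hf₂deg : f₂.natDegree < k := by
        have h1 : (f₂.map (Int.castRingHom ℚ)).natDegree = f₂.natDegree :=
          Polynomial.natDegree_map_eq_of_injective Int.cast_injective _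
        rw [hf₂, ← Polynomial.C_eq_intCast, Polynomial.natDegree_C_mul
          (show ((b : ℤ) : ℚ) ≠ 0 by exact_mod_cast hb)] at h1
        omega
      have step0 : intPolyEmb ZHat (d₁ * f₂) * g = 0 := by
        rw [hid1, map_mul, map_intCast, mul_assoc, hfg, mul_zero]
      have step1 : intPolyEmb ZHat f₂ * (intPolyEmb ZHat d₁ * g) = 0 := by
        rw [map_mul] at step0
        rw [← step0]; ring
      have step2 : intPolyEmb ZHat d₁ * g = 0 :=
        ih f₂.natDegree hf₂deg f₂ rfl hf₂ne _ step1
      have step3 : ((a * e : ℤ) : CompletedCycRing ZHat)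
          * (intPolyEmb ZHat ((X : Polynomial ℤ) ^ ((n : ℕ+) : ℕ) - 1) * g) = 0 := by
        have hdd : intPolyEmb ZHat (d₁ * d₂) * g = 0 := by
          rw [map_mul, mul_comm (intPolyEmb ZHat d₁), mul_assoc, step2, mul_zero]
        rw [hid2, map_mul, map_intCast, mul_assoc] at hdd
        exact hdd
      have step4 : intPolyEmb ZHat ((X : Polynomial ℤ) ^ ((n : ℕ+) : ℕ) - 1) * g = 0 :=
        completed_zsmul_cancel (mul_ne_zero ha he) (by rw [zsmul_eq_mul, step3])
      exact lemA n step4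


end Aux



/-- Every nonzero polynomial `f ∈ ℤ[t]`, regarded as an element of the
completed group ring `Ẑ[[t^Ẑ]]`, is not a zero-divisor. -/
theorem int_poly_not_zeroDivisor_in_completed_group_ring
    (f : Polynomial ℤ) (hf : f ≠ 0) (g : CompletedCycRing ZHat)
    (hfg : intPolyEmb ZHat f * g = 0) : g = 0 :=
  main_aux f.natDegree f rfl hf g hfg
end
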